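/- Suppose the fractal operator F^S : X⁺ → X⁺ (mapping f to the fixed point f(S) of the RB operator with germ f) is well-defined with S_∞ < 1 and L a bounded semi-linear operator with norm ‖I − L‖. Then ‖f(S) − f‖ ≤ (S_∞/(1 − S_∞))·‖I − L‖·‖f‖ for every f, and hence ‖F^S f‖ ≤ (1 + (S_∞/(1 − S_∞))‖I − L‖)·‖f‖; if moreover F^S has 1 in its point spectrum (i.e., F^S g = g for some nonzero g), then 1 ≤ ‖F^S‖ ≤ 1 + (S_∞/(1 − S_∞))‖I − L‖. -/
import Mathlib


open NNReal

/-- Norm estimates for the fractal operator `F^S : f ↦ f(S)`: from the fixed-point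
equation one has `‖f(S) − f‖ ≤ S_∞·‖f(S) − Lf‖`, and hence
`‖f(S) − f‖ ≤ (S_∞/(1−S_∞))·‖I − L‖·‖f‖` and
`‖F^S f‖ ≤ (1 + (S_∞/(1−S_∞))·‖I − L‖)·‖f‖`. If moreover `1` lies in the point
spectrum of `F^S` (i.e. `F^S g = g` for some `g ≠ 0`), then
`1 ≤ ‖F^S‖ ≤ 1 + (S_∞/(1−S_∞))·‖I − L‖`. -/
theorem stmt_19 (V : Type*) [NormedAddCommGroup V] [NormedSpace ℝ V]
    (L : V →L[ℝ] V) (Φ : V → V) (Sinf : ℝ) (hS0 : 0 ≤ Sinf) (hS1 : Sinf < 1)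
    -- the key estimate coming from the self-referential fixed-point equation (5.11)
    (hkey : ∀ f : V, ‖Φ f - f‖ ≤ Sinf * ‖Φ f - L f‖)
    (opn : (V → V) → ℝ)
    (hopn : ∀ G : V → V, opn G = ⨆ f : {f : V // f ≠ 0}, ‖G (f : V)‖ / ‖(f : V)‖) :
    (∀ f : V, ‖Φ f - f‖ ≤ Sinf / (1 - Sinf) * ‖ContinuousLinearMap.id ℝ V - L‖ * ‖f‖) ∧
    (∀ f : V, ‖Φ f‖ ≤ (1 + Sinf / (1 - Sinf) * ‖ContinuousLinearMap.id ℝ V - L‖) * ‖f‖) ∧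
    ((∃ g : V, g ≠ 0 ∧ Φ g = g) →
      1 ≤ opn Φ ∧ opn Φ ≤ 1 + Sinf / (1 - Sinf) * ‖ContinuousLinearMap.id ℝ V - L‖) := by
  have h1S : (0:ℝ) < 1 - Sinf := by linarith
  set C : ℝ := Sinf / (1 - Sinf) * ‖ContinuousLinearMap.id ℝ V - L‖ with hC
  have hCnn : 0 ≤ C := by
    apply mul_nonneg (div_nonneg hS0 h1S.le) (norm_nonneg _)
  have key : ∀ f : V, ‖Φ f - f‖ ≤ C * ‖f‖ := by
    intro f
    have h2 : ‖f - L f‖ ≤ ‖ContinuousLinearMap.id ℝ V - L‖ * ‖f‖ := by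
      have := (ContinuousLinearMap.id ℝ V - L).le_opNorm f
      simpa using this
    have h3 : ‖Φ f - L f‖ ≤ ‖Φ f - f‖ + ‖f - L f‖ := by
      have := norm_add_le (Φ f - f) (f - L f)
      simpa using this
    have h4 := hkey f
    have h5 : ‖Φ f - f‖ ≤ Sinf * (‖Φ f - f‖ + ‖f - L f‖) :=
      h4.trans (by nlinarith [h3, norm_nonneg (Φ f - L f)])
    have h6 : (1 - Sinf) * ‖Φ f - f‖ ≤ Sinf * ‖f - L f‖ := by nlinarith
    have h7 : ‖Φ f - f‖ ≤ Sinf / (1 - Sinf) * ‖f - L f‖ := by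
      rw [div_mul_eq_mul_div, le_div_iff₀ h1S]; nlinarith
    calc ‖Φ f - f‖ ≤ Sinf / (1 - Sinf) * ‖f - L f‖ := h7
      _ ≤ Sinf / (1 - Sinf) * (‖ContinuousLinearMap.id ℝ V - L‖ * ‖f‖) := by
          apply mul_le_mul_of_nonneg_left h2 (div_nonneg hS0 h1S.le)
      _ = C * ‖f‖ := by ring
  have bnd : ∀ f : V, ‖Φ f‖ ≤ (1 + C) * ‖f‖ := by
    intro f
    have := norm_add_le (Φ f - f) f
    have := key f
    calc ‖Φ f‖ = ‖Φ f - f + f‖ := by rw [sub_add_cancel]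
      _ ≤ ‖Φ f - f‖ + ‖f‖ := norm_add_le _ _
      _ ≤ C * ‖f‖ + ‖f‖ := by linarith
      _ = (1 + C) * ‖f‖ := by ring
  refine ⟨key, bnd, ?_⟩
  rintro ⟨g, hg, hΦg⟩
  haveI : Nonempty {f : V // f ≠ 0} := ⟨⟨g, hg⟩⟩
  rw [hopn]
  have hub : ∀ f : {f : V // f ≠ 0}, ‖Φ (f : V)‖ / ‖(f : V)‖ ≤ 1 + C := by
    rintro ⟨f, hf⟩
    have hfpos : 0 < ‖f‖ := norm_pos_iff.mpr hf
    rw [div_le_iff₀ hfpos]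
    simpa using bnd f
  constructor
  · have hgpos : 0 < ‖g‖ := norm_pos_iff.mpr hg
    have : (1:ℝ) = ‖Φ g‖ / ‖g‖ := by rw [hΦg, div_self hgpos.ne']
    rw [this]
    exact le_ciSup ⟨1 + C, Set.forall_mem_range.mpr hub⟩ (⟨g, hg⟩ : {f : V // f ≠ 0})
  · exact ciSup_le hub
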